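/- arXiv:2003.04829 — 3 statements merged into one kernel-verified Lean document; each statement's English description precedes it below -/
import Mathlib

section
/- Let d ≥ 1 and let m, m' be Borel probability measures on ℝ^d with ∫(1+|x|) dm(x) < ∞ and ∫(1+|x|) dm'(x) < ∞. Then there exists a Borel probability measure π on ℝ^d × ℝ^d whose first marginal is m and whose second marginal is m', such that ∫_{ℝ^d×ℝ^d} |x − y| dπ(x,y) ≤ ∫_{ℝ^d} (1 + |x|) d|m − m'|(x). In particular, the 1-Wasserstein distance satisfies W₁(m, m') ≤ ‖m − m'‖_φ for φ(x) = 1 + |x|. -/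
open MeasureTheory

/-- For Borel probability measures `m, m'` on `ℝ^d` with finite first
moments, there is a coupling `π` of `m` and `m'` with
`∫ |x − y| dπ(x,y) ≤ ∫ (1 + |x|) d|m − m'|(x)`; in particular
`W₁(m,m') ≤ ‖m − m'‖_φ` for `φ(x) = 1 + |x|`. -/
theorem stmt_7 (d : ℕ) (hd : 1 ≤ d)
    (m m' : Measure (EuclideanSpace ℝ (Fin d)))
    [IsProbabilityMeasure m] [IsProbabilityMeasure m']
    (hm : ∫⁻ x, ENNReal.ofReal (1 + ‖x‖) ∂m < ⊤)
    (hm' : ∫⁻ x, ENNReal.ofReal (1 + ‖x‖) ∂m' < ⊤) :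
    ∃ π : Measure (EuclideanSpace ℝ (Fin d) × EuclideanSpace ℝ (Fin d)),
      IsProbabilityMeasure π ∧ π.map Prod.fst = m ∧ π.map Prod.snd = m' ∧
      ∫⁻ p, ENNReal.ofReal ‖p.1 - p.2‖ ∂π
        ≤ ∫⁻ x, ENNReal.ofReal (1 + ‖x‖)
            ∂((m.toSignedMeasure - m'.toSignedMeasure).totalVariation) := by
  classical
  set E := EuclideanSpace ℝ (Fin d)
  set s := m.toSignedMeasure - m'.toSignedMeasure with hs_def
  set p := s.toJordanDecomposition.posPart with hp_def
  set n := s.toJordanDecomposition.negPart with hn_def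
  have hsm : p.toSignedMeasure - n.toSignedMeasure = s :=
    s.toSignedMeasure_toJordanDecomposition
  have key : m + n = m' + p := by
    rw [← Measure.toSignedMeasure_eq_toSignedMeasure_iff,
      Measure.toSignedMeasure_add, Measure.toSignedMeasure_add]
    have h : m.toSignedMeasure - m'.toSignedMeasure
        = p.toSignedMeasure - n.toSignedMeasure := hsm.symm
    rw [sub_eq_sub_iff_add_eq_add] at h
    exact h.trans (add_comm _ _)
  have htv : s.totalVariation = p + n := rfl
  obtain ⟨S, hSmeas, hpS, hnSc⟩ := s.toJordanDecomposition.mutuallySingular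
  have hpm : p ≤ m := by
    rw [Measure.le_iff]
    intro A hA
    have h1 : p A = p (A ∩ Sᶜ) := by
      refine le_antisymm ?_ (measure_mono Set.inter_subset_left)
      calc p A = p ((A ∩ S) ∪ (A ∩ Sᶜ)) := by rw [Set.inter_union_compl]
        _ ≤ p (A ∩ S) + p (A ∩ Sᶜ) := measure_union_le _ _
        _ = p (A ∩ Sᶜ) := by
            rw [measure_mono_null Set.inter_subset_right hpS, zero_add]
    have h2 : n (A ∩ Sᶜ) = 0 := measure_mono_null Set.inter_subset_right hnSc
    have h3 := congrArg (fun ν : Measure E => ν (A ∩ Sᶜ)) key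
    simp only [Measure.add_apply, h2, add_zero] at h3
    calc p A = p (A ∩ Sᶜ) := h1
      _ ≤ m' (A ∩ Sᶜ) + p (A ∩ Sᶜ) := le_add_self
      _ = m (A ∩ Sᶜ) := h3.symm
      _ ≤ m A := measure_mono Set.inter_subset_left
  set α := p Set.univ with hα_def
  have hα_ne_top : α ≠ ⊤ := measure_ne_top _ _
  have hnα : n Set.univ = α := by
    have h := congrArg (fun ν : Measure E => ν (Set.univ : Set E)) key
    simp only [Measure.add_apply, measure_univ] at h
    exact (ENNReal.add_right_inj ENNReal.one_ne_top).mp h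
  set μ := m - p with hμ_def
  have hμp : μ + p = m := Measure.sub_add_cancel_of_le hpm
  haveI : IsFiniteMeasure μ := isFiniteMeasure_of_le m Measure.sub_le
  have hμn : μ + n = m' := by
    ext A hA
    have hkA := congrArg (fun ν : Measure E => ν A) key
    simp only [Measure.add_apply] at hkA ⊢
    have hpA : p A ≤ m A := Measure.le_iff'.mp hpm A
    rw [hμ_def, Measure.sub_apply hA hpm]
    have h4 : (m A - p A) + n A + p A = m' A + p A := by
      rw [add_right_comm, tsub_add_cancel_of_le hpA]; exact hkA
    exact (ENNReal.add_left_inj (measure_ne_top p A)).mp h4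
  have hdiag : Measurable fun x : E => (x, x) := measurable_id.prodMk measurable_id
  have hf : Measurable fun q : E × E => ENNReal.ofReal ‖q.1 - q.2‖ :=
    (measurable_fst.sub measurable_snd).norm.ennreal_ofReal
  have hf1 : Measurable fun x : E => ENNReal.ofReal ‖x‖ := measurable_norm.ennreal_ofReal
  by_cases hα0 : α = 0
  · -- degenerate case: m = m'
    have hp0 : p = 0 := Measure.measure_univ_eq_zero.mp hα0
    have hn0 : n = 0 := Measure.measure_univ_eq_zero.mp (hnα.trans hα0)
    have hmm : m = m' := by
      have := key
      rw [hp0, hn0, add_zero, add_zero] at this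
      exact this
    refine ⟨m.map (fun x => (x, x)), Measure.isProbabilityMeasure_map hdiag.aemeasurable, ?_, ?_, ?_⟩
    · rw [Measure.map_map measurable_fst hdiag]
      exact Measure.map_id
    · rw [Measure.map_map measurable_snd hdiag]
      rw [show (Prod.snd ∘ fun x : E => (x, x)) = id from rfl, Measure.map_id, hmm]
    · rw [lintegral_map hf hdiag]
      simp
  · have hfst : (μ.map (fun x : E => (x, x)) + α⁻¹ • (p.prod n)).map Prod.fst = m := by
      rw [Measure.map_add _ _ measurable_fst, Measure.map_smul,
        Measure.map_map measurable_fst hdiag, Measure.map_fst_prod, hnα,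
        show (Prod.fst ∘ fun x : E => (x, x)) = id from rfl, Measure.map_id,
        smul_smul, ENNReal.inv_mul_cancel hα0 hα_ne_top, one_smul, hμp]
    have hsnd : (μ.map (fun x : E => (x, x)) + α⁻¹ • (p.prod n)).map Prod.snd = m' := by
      rw [Measure.map_add _ _ measurable_snd, Measure.map_smul,
        Measure.map_map measurable_snd hdiag, Measure.map_snd_prod, ← hα_def,
        show (Prod.snd ∘ fun x : E => (x, x)) = id from rfl, Measure.map_id,
        smul_smul, ENNReal.inv_mul_cancel hα0 hα_ne_top, one_smul, hμn]
    refine ⟨μ.map (fun x => (x, x)) + α⁻¹ • (p.prod n), ?_, hfst, hsnd, ?_⟩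
    · constructor
      have h2 := congrArg (fun ν : Measure E => ν (Set.univ : Set E)) hfst
      simpa [Measure.map_apply measurable_fst MeasurableSet.univ] using h2
    ·
      rw [lintegral_add_measure, lintegral_smul_measure, lintegral_map hf hdiag]
      have hdz : ∫⁻ x, ENNReal.ofReal ‖x - x‖ ∂μ = 0 := by simp
      rw [hdz, zero_add]
      have e1 : ∫⁻ z : E × E, ENNReal.ofReal ‖z.1‖ ∂(p.prod n)
          = α * ∫⁻ x, ENNReal.ofReal ‖x‖ ∂p := by
        rw [← lintegral_map hf1 measurable_fst, Measure.map_fst_prod, hnα,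
          lintegral_smul_measure, smul_eq_mul]
      have e2 : ∫⁻ z : E × E, ENNReal.ofReal ‖z.2‖ ∂(p.prod n)
          = α * ∫⁻ x, ENNReal.ofReal ‖x‖ ∂n := by
        rw [← lintegral_map hf1 measurable_snd, Measure.map_snd_prod, ← hα_def,
          lintegral_smul_measure, smul_eq_mul]
      have step1 : ∫⁻ z : E × E, ENNReal.ofReal ‖z.1 - z.2‖ ∂(p.prod n)
          ≤ α * ∫⁻ x, ENNReal.ofReal ‖x‖ ∂p + α * ∫⁻ x, ENNReal.ofReal ‖x‖ ∂n := by
        calc ∫⁻ z : E × E, ENNReal.ofReal ‖z.1 - z.2‖ ∂(p.prod n)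
            ≤ ∫⁻ z : E × E, (ENNReal.ofReal ‖z.1‖ + ENNReal.ofReal ‖z.2‖) ∂(p.prod n) := by
              refine lintegral_mono fun z => ?_
              rw [← ENNReal.ofReal_add (norm_nonneg _) (norm_nonneg _)]
              exact ENNReal.ofReal_le_ofReal (norm_sub_le _ _)
          _ = α * ∫⁻ x, ENNReal.ofReal ‖x‖ ∂p + α * ∫⁻ x, ENNReal.ofReal ‖x‖ ∂n := by
              rw [lintegral_add_left (show Measurable fun z : E × E => ENNReal.ofReal ‖z.1‖ from hf1.comp measurable_fst), e1, e2]
      calc α⁻¹ * ∫⁻ z : E × E, ENNReal.ofReal ‖z.1 - z.2‖ ∂(p.prod n)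
          ≤ α⁻¹ * (α * ∫⁻ x, ENNReal.ofReal ‖x‖ ∂p + α * ∫⁻ x, ENNReal.ofReal ‖x‖ ∂n) :=
            mul_le_mul_right step1 _
        _ = ∫⁻ x, ENNReal.ofReal ‖x‖ ∂p + ∫⁻ x, ENNReal.ofReal ‖x‖ ∂n := by
            rw [mul_add, ← mul_assoc, ← mul_assoc, ENNReal.inv_mul_cancel hα0 hα_ne_top,
              one_mul, one_mul]
        _ ≤ ∫⁻ x, ENNReal.ofReal (1 + ‖x‖) ∂p + ∫⁻ x, ENNReal.ofReal (1 + ‖x‖) ∂n := by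
            exact add_le_add
              (lintegral_mono fun x =>
                ENNReal.ofReal_le_ofReal (by linarith [norm_nonneg x]))
              (lintegral_mono fun x =>
                ENNReal.ofReal_le_ofReal (by linarith [norm_nonneg x]))
        _ = ∫⁻ x, ENNReal.ofReal (1 + ‖x‖) ∂s.totalVariation := by
            rw [htv, lintegral_add_measure]
end

section
/- Let d ≥ 1, λ > 0 and set φ(x) := exp(√(1+|x|²)) on ℝ^d. There exists a constant C > 0, depending only on d and λ, such that for all t ∈ (0,1], all h ∈ ℝ^d with |h| ≤ 1, and all x ∈ ℝ^d, ∫_{ℝ^d} exp(√(1 + |x − h − y|²)) ϱ_λ(t,y) dy ≤ C exp(√(1+|x|²)). Moreover |∇φ(x)| ≤ φ(x) for all x, so φ satisfies the weight condition sup_{t∈(0,1], |h|≤1} ∫ (φ + |∇φ|)(x−h−y) ϱ_λ(t,y) dy ≲_λ φ(x). -/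
open MeasureTheory

private lemma sqrt_shift (a b c : ℝ) (ha : 0 ≤ a) (hb : 0 ≤ b) (hc0 : 0 ≤ c)
    (hc : c ≤ a + b) : Real.sqrt (1 + c^2) ≤ Real.sqrt (1 + a^2) + b := by
  have haa : a ≤ Real.sqrt (1 + a^2) := by
    have h := Real.sq_sqrt (by positivity : (0:ℝ) ≤ 1 + a^2)
    nlinarith [Real.sqrt_nonneg (1 + a^2)]
  have h1 : 1 + c^2 ≤ (Real.sqrt (1 + a^2) + b)^2 := by
    have h := Real.sq_sqrt (by positivity : (0:ℝ) ≤ 1 + a^2)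
    nlinarith [Real.sqrt_nonneg (1 + a^2)]
  calc Real.sqrt (1 + c^2) ≤ Real.sqrt ((Real.sqrt (1 + a^2) + b)^2) :=
        Real.sqrt_le_sqrt h1
    _ = Real.sqrt (1 + a^2) + b := Real.sqrt_sq (by positivity)

private lemma gauss_integrable (d : ℕ) (b : ℝ) (hb : 0 < b) :
    Integrable (fun y : EuclideanSpace ℝ (Fin d) => Real.exp (-b * ‖y‖^2)) := by
  have h := (GaussianFourier.integrable_cexp_neg_mul_sq_norm_add (V := EuclideanSpace ℝ (Fin d))
      (b := (b:ℂ)) (by simpa using hb) 0 0).norm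
  refine h.congr (Filter.Eventually.of_forall (fun y => ?_))
  simp only [Complex.norm_exp]
  norm_num [← Complex.ofReal_pow]

private lemma gauss_integral (d : ℕ) (b : ℝ) (hb : 0 < b) :
    ∫ y : EuclideanSpace ℝ (Fin d), Real.exp (-b * ‖y‖^2) = (Real.pi / b) ^ ((d:ℝ)/2) := by
  rw [GaussianFourier.integral_rexp_neg_mul_sq_norm hb]
  simp [finrank_euclideanSpace_fin]

set_option maxHeartbeats 1000000 in
/-- For `d ≥ 1`, `λ > 0` and `φ(x) = exp(√(1+|x|²))`, there is
`C = C(d,λ) > 0` such that for all `t ∈ (0,1]`, `|h| ≤ 1`, `x ∈ ℝ^d`,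
`∫ exp(√(1+|x−h−y|²)) ϱ_λ(t,y) dy ≤ C exp(√(1+|x|²))`; moreover `|∇φ(x)| ≤ φ(x)`
for all `x`. -/
theorem stmt_9 (d : ℕ) (hd : 1 ≤ d) (lam : ℝ) (hlam : 0 < lam) :
    (∃ C : ℝ, 0 < C ∧ ∀ t ∈ Set.Ioc (0:ℝ) 1, ∀ h : EuclideanSpace ℝ (Fin d), ‖h‖ ≤ 1 →
      ∀ x : EuclideanSpace ℝ (Fin d),
      (∫ y : EuclideanSpace ℝ (Fin d),
          Real.exp (Real.sqrt (1 + ‖x - h - y‖ ^ 2)) *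
            (t ^ (-(d : ℝ) / 2) * Real.exp (-lam * ‖y‖ ^ 2 / t)))
        ≤ C * Real.exp (Real.sqrt (1 + ‖x‖ ^ 2))) ∧
    ∀ x : EuclideanSpace ℝ (Fin d),
      ‖fderiv ℝ (fun z : EuclideanSpace ℝ (Fin d) =>
          Real.exp (Real.sqrt (1 + ‖z‖ ^ 2))) x‖
        ≤ Real.exp (Real.sqrt (1 + ‖x‖ ^ 2)) := by
  constructor
  · refine ⟨Real.exp (1 + 1/(2*lam)) * (2*Real.pi/lam) ^ ((d:ℝ)/2), ?_, ?_⟩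
    · have : (0:ℝ) < 2*Real.pi/lam := by positivity
      positivity
    intro t ht h hh x
    have ht0 : 0 < t := ht.1
    have ht1 : t ≤ 1 := ht.2
    set S : ℝ := Real.sqrt (1 + ‖x‖^2) with hS
    set b : ℝ := lam / (2*t) with hbdef
    have hb : 0 < b := by positivity
    set A : ℝ := Real.exp (1 + 1/(2*lam)) * t ^ (-(d:ℝ)/2) * Real.exp S with hA
    have hgint : Integrable
        (fun y : EuclideanSpace ℝ (Fin d) => A * Real.exp (-b * ‖y‖^2)) :=
      (gauss_integrable d b hb).const_mul A
    have hmono : ∀ y : EuclideanSpace ℝ (Fin d),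
        Real.exp (Real.sqrt (1 + ‖x - h - y‖ ^ 2)) *
            (t ^ (-(d : ℝ) / 2) * Real.exp (-lam * ‖y‖ ^ 2 / t))
          ≤ A * Real.exp (-b * ‖y‖^2) := by
      intro y
      have hnorm : ‖x - h - y‖ ≤ ‖x‖ + (1 + ‖y‖) := by
        have : x - h - y = x - (h + y) := by abel
        rw [this]
        calc ‖x - (h + y)‖ ≤ ‖x‖ + ‖h + y‖ := norm_sub_le _ _
          _ ≤ ‖x‖ + (‖h‖ + ‖y‖) := by gcongr; exact norm_add_le _ _
          _ ≤ ‖x‖ + (1 + ‖y‖) := by gcongr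
      have hsqrt : Real.sqrt (1 + ‖x - h - y‖^2) ≤ S + (1 + ‖y‖) :=
        sqrt_shift ‖x‖ (1 + ‖y‖) ‖x - h - y‖ (norm_nonneg _)
          (by positivity) (norm_nonneg _) hnorm
      have hu : ‖y‖^2 ≤ ‖y‖^2 / t := by
        rw [le_div_iff₀ ht0]
        nlinarith [sq_nonneg ‖y‖]
      have hkey : ‖y‖ + (-lam * ‖y‖^2 / t) ≤ 1/(2*lam) + (-b * ‖y‖^2) := by
        have e1 : -lam * ‖y‖^2 / t = -lam * (‖y‖^2 / t) := by ring
        have e2 : -b * ‖y‖^2 = -(lam/2) * (‖y‖^2 / t) := by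
          rw [hbdef]; field_simp
        have h0 : 2*lam * (1/(2*lam)) = 1 := by field_simp
        have h2 : 2*lam*‖y‖ ≤ 1 + lam^2 * (‖y‖^2 / t) := by
          nlinarith [mul_le_mul_of_nonneg_left hu (sq_nonneg lam), sq_nonneg (lam*‖y‖ - 1)]
        rw [e1, e2]
        nlinarith [h2, h0, hlam]
      have harg : Real.sqrt (1 + ‖x - h - y‖^2) + (-lam * ‖y‖^2 / t)
          ≤ (1 + 1/(2*lam)) + S + (-b * ‖y‖^2) := by linarith
      calc Real.exp (Real.sqrt (1 + ‖x - h - y‖ ^ 2)) *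
            (t ^ (-(d : ℝ) / 2) * Real.exp (-lam * ‖y‖ ^ 2 / t))
          = t ^ (-(d:ℝ)/2) *
            Real.exp (Real.sqrt (1 + ‖x - h - y‖^2) + (-lam * ‖y‖^2 / t)) := by
            rw [Real.exp_add]; ring
        _ ≤ t ^ (-(d:ℝ)/2) *
            Real.exp ((1 + 1/(2*lam)) + S + (-b * ‖y‖^2)) := by
            have : (0:ℝ) ≤ t ^ (-(d:ℝ)/2) := Real.rpow_nonneg ht0.le _
            exact mul_le_mul_of_nonneg_left (Real.exp_le_exp.mpr harg) this
        _ = A * Real.exp (-b * ‖y‖^2) := by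
            rw [hA, Real.exp_add, Real.exp_add]; ring
    have hint_le : (∫ y : EuclideanSpace ℝ (Fin d),
        Real.exp (Real.sqrt (1 + ‖x - h - y‖ ^ 2)) *
          (t ^ (-(d : ℝ) / 2) * Real.exp (-lam * ‖y‖ ^ 2 / t)))
        ≤ ∫ y : EuclideanSpace ℝ (Fin d), A * Real.exp (-b * ‖y‖^2) := by
      refine integral_mono_of_nonneg ?_ hgint ?_
      · exact Filter.Eventually.of_forall (fun y => by positivity)
      · exact Filter.Eventually.of_forall hmono
    refine hint_le.trans (le_of_eq ?_)
    rw [integral_const_mul, gauss_integral d b hb]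
    have hpib : Real.pi / b = 2*Real.pi/lam * t := by
      rw [hbdef]; field_simp
    rw [hpib, Real.mul_rpow (by positivity) ht0.le]
    have htt : t ^ (-(d:ℝ)/2) * t ^ ((d:ℝ)/2) = 1 := by
      rw [← Real.rpow_add ht0, show (-(d:ℝ)/2 + (d:ℝ)/2) = 0 by ring, Real.rpow_zero]
    calc A * ((2*Real.pi/lam) ^ ((d:ℝ)/2) * t ^ ((d:ℝ)/2))
        = (t ^ (-(d:ℝ)/2) * t ^ ((d:ℝ)/2)) *
            (Real.exp (1 + 1/(2*lam)) * (2*Real.pi/lam) ^ ((d:ℝ)/2) * Real.exp S) := by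
          rw [hA]; ring
      _ = Real.exp (1 + 1/(2*lam)) * (2*Real.pi/lam) ^ ((d:ℝ)/2) * Real.exp S := by
          rw [htt, one_mul]
  · intro x
    set s : ℝ := Real.sqrt (1 + ‖x‖^2) with hs
    have hpos : (0:ℝ) < 1 + ‖x‖^2 := by positivity
    have hspos : 0 < s := Real.sqrt_pos.mpr hpos
    have h1 : HasFDerivAt (fun z : EuclideanSpace ℝ (Fin d) => 1 + ‖z‖^2)
        (2 • (innerSL ℝ x)) x := ((hasStrictFDerivAt_norm_sq x).hasFDerivAt).const_add 1
    have h2 : HasDerivAt Real.sqrt (1 / (2 * s)) (1 + ‖x‖^2) :=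
      Real.hasDerivAt_sqrt (ne_of_gt hpos)
    have h3 : HasFDerivAt (fun z : EuclideanSpace ℝ (Fin d) => Real.sqrt (1 + ‖z‖^2))
        ((1 / (2 * s)) • (2 • (innerSL ℝ x))) x := h2.comp_hasFDerivAt x h1
    have h4 : HasFDerivAt (fun z : EuclideanSpace ℝ (Fin d) => Real.exp (Real.sqrt (1 + ‖z‖^2)))
        (Real.exp s • ((1 / (2 * s)) • (2 • (innerSL ℝ x)))) x :=
      by have := (Real.hasDerivAt_exp s).comp_hasFDerivAt x h3; exact this
    rw [h4.fderiv]
    have h2s : (2:ℕ) • (innerSL ℝ x) = (2:ℝ) • (innerSL ℝ x) := by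
      simp [two_smul]
    rw [h2s, norm_smul, norm_smul, norm_smul]
    simp only [Real.norm_eq_abs, innerSL_apply_norm]
    have hxle : ‖x‖ ≤ s := by
      have h := Real.sq_sqrt hpos.le
      nlinarith [norm_nonneg x]
    calc |Real.exp s| * (|1/(2*s)| * (|2| * ‖x‖))
        = Real.exp s * (‖x‖/s) := by
          rw [abs_of_pos (Real.exp_pos s), abs_of_pos (by positivity : (0:ℝ) < 1/(2*s)),
            abs_two]
          field_simp
      _ ≤ Real.exp s * 1 :=
          mul_le_mul_of_nonneg_left ((div_le_one hspos).mpr hxle) (Real.exp_pos s).le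
      _ = Real.exp s := mul_one _
end

section
/- Let γ_v denote the centered Gaussian measure on ℝ with variance v > 0. Set c₁ := γ₁((−2,2)), c₂ := γ₄((−2,2)), λ₁ := (2c₁ − c₂ − 1)/(c₁ − c₂) and λ₂ := (2c₁ − c₂)/(c₁ − c₂), and for t > 0, x ∈ ℝ, let Σ(t,x) := λ₁ if |x| < 2√t and Σ(t,x) := λ₂ otherwise. Then c₁ > c₂, and for every t > 0 one has ∫_ℝ Σ(t,x) dγ_t(x) = 1 and ∫_ℝ Σ(t,x) dγ_{4t}(x) = 2. (Since γ_t is the law of a standard Brownian motion W at time t and γ_{4t} is the law of 2W at time t, this exhibits two distinct solutions of the distribution-dependent SDE dX_t = σ(t,[X_t]) dW_t with σ(t,m) := ∫ Σ(t,x) m(dx) and X_0 = 0.) -/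
open MeasureTheory ProbabilityTheory
open scoped NNReal ENNReal

/-- `c₁ = γ₁((−2,2))` where `γ_v` is the centered Gaussian of variance `v`. -/
noncomputable def c1 : ℝ := (gaussianReal 0 1 (Set.Ioo (-2 : ℝ) 2)).toReal

/-- `c₂ = γ₄((−2,2))`. -/
noncomputable def c2 : ℝ := (gaussianReal 0 4 (Set.Ioo (-2 : ℝ) 2)).toReal

noncomputable def lam1 : ℝ := (2 * c1 - c2 - 1) / (c1 - c2)

noncomputable def lam2 : ℝ := (2 * c1 - c2) / (c1 - c2)

/-- `Σ(t,x) = λ₁` if `|x| < 2√t`, and `λ₂` otherwise. -/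
noncomputable def SigmaEx (t x : ℝ) : ℝ := if |x| < 2 * Real.sqrt t then lam1 else lam2

lemma gauss_scale {c : ℝ} (hc : 0 < c) (a : ℝ) :
    gaussianReal 0 (⟨c ^ 2, sq_nonneg c⟩ * 1) (Set.Ioo (-a) a)
      = gaussianReal 0 1 (Set.Ioo (-(a / c)) (a / c)) := by
  have h := ProbabilityTheory.gaussianReal_map_const_mul (μ := 0) (v := 1) c
  have hmeas : MeasurableSet (Set.Ioo (-a) a) := measurableSet_Ioo
  have hpre : (fun x : ℝ => c * x) ⁻¹' Set.Ioo (-a) a = Set.Ioo (-(a / c)) (a / c) := by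
    ext x
    simp only [Set.mem_preimage, Set.mem_Ioo]
    rw [← neg_div, div_lt_iff₀ hc, lt_div_iff₀ hc]
    constructor <;> rintro ⟨h1, h2⟩ <;> constructor <;> nlinarith
  calc gaussianReal 0 (⟨c ^ 2, sq_nonneg c⟩ * 1) (Set.Ioo (-a) a)
      = (gaussianReal 0 1).map (fun x => c * x) (Set.Ioo (-a) a) := by
        rw [h]; norm_num
        exact congrArg (fun v => gaussianReal 0 v (Set.Ioo (-a) a)) (mul_one _)
    _ = gaussianReal 0 1 ((fun x : ℝ => c * x) ⁻¹' Set.Ioo (-a) a) :=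
        Measure.map_apply (measurable_const_mul c) hmeas
    _ = _ := by rw [hpre]

lemma integral_if_abs (μ : Measure ℝ) [IsProbabilityMeasure μ] (r a b : ℝ) :
    ∫ x, (if |x| < r then a else b) ∂μ
      = (a - b) * (μ (Set.Ioo (-r) r)).toReal + b := by
  have hs : MeasurableSet (Set.Ioo (-r) r) := measurableSet_Ioo
  have hfun : ∀ x, (if |x| < r then a else b)
      = (Set.Ioo (-r) r).indicator (fun _ => a - b) x + b := by
    intro x
    by_cases h : |x| < r
    · rw [if_pos h, Set.indicator_of_mem (by simpa [Set.mem_Ioo] using abs_lt.mp h)]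
      ring
    · rw [if_neg h, Set.indicator_of_notMem (by simpa [Set.mem_Ioo, abs_lt] using h)]
      ring
  simp_rw [hfun]
  rw [integral_add ((integrable_const (a - b)).indicator hs) (integrable_const b),
    integral_indicator_const _ hs, integral_const]
  simp [measure_univ, mul_comm]
  exact Or.inl rfl

lemma c2_lt_c1 : c2 < c1 := by
  have h4 : (4 : ℝ≥0) = (⟨(2 : ℝ) ^ 2, sq_nonneg 2⟩ * 1 : ℝ≥0) := by
    ext; norm_num
    exact (congrArg NNReal.toReal (mul_one (⟨4, by norm_num⟩ : ℝ≥0))).symm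
  have hc2 : c2 = (gaussianReal 0 1 (Set.Ioo (-1 : ℝ) 1)).toReal := by
    unfold c2
    rw [h4, gauss_scale (by norm_num : (0:ℝ) < 2) 2]
    norm_num
  have hsub : gaussianReal 0 1 (Set.Ioo (-1 : ℝ) 1) + gaussianReal 0 1 (Set.Ioo (1 : ℝ) 2)
      ≤ gaussianReal 0 1 (Set.Ioo (-2 : ℝ) 2) := by
    rw [← measure_union (by
        intro s hs hs' x hx
        have h1 := hs hx
        have h2 := hs' hx
        simp only [Set.mem_Ioo] at h1 h2
        exact absurd h1.2 (not_lt.mpr h2.1.le)) measurableSet_Ioo]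
    exact measure_mono (by
      intro x hx
      rcases hx with hx | hx <;> simp only [Set.mem_Ioo] at hx ⊢ <;>
        constructor <;> linarith [hx.1, hx.2])
  have hpos : 0 < gaussianReal 0 1 (Set.Ioo (1 : ℝ) 2) := by
    rw [ProbabilityTheory.gaussianReal_of_var_ne_zero 0 one_ne_zero,
      withDensity_apply _ measurableSet_Ioo]
    rw [MeasureTheory.lintegral_pos_iff_support (by measurability)]
    have : Function.support (ProbabilityTheory.gaussianPDF 0 1) = Set.univ := by
      ext x
      simp [Function.mem_support,
        (ProbabilityTheory.gaussianPDF_pos 0 one_ne_zero x).ne']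
    rw [this]
    simp [Measure.restrict_apply, Real.volume_Ioo]
  have hlt : gaussianReal 0 1 (Set.Ioo (-1 : ℝ) 1) < gaussianReal 0 1 (Set.Ioo (-2 : ℝ) 2) := by
    calc gaussianReal 0 1 (Set.Ioo (-1 : ℝ) 1)
        < gaussianReal 0 1 (Set.Ioo (-1 : ℝ) 1) + gaussianReal 0 1 (Set.Ioo (1 : ℝ) 2) :=
          ENNReal.lt_add_right (measure_ne_top _ _) hpos.ne'
      _ ≤ _ := hsub
  rw [hc2]
  unfold c1
  exact ENNReal.toReal_strict_mono (measure_ne_top _ _) hlt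

/-- `c₁ > c₂`, and for every `t > 0`,
`∫ Σ(t,·) dγ_t = 1` and `∫ Σ(t,·) dγ_{4t} = 2`. -/
theorem stmt_10 :
    c2 < c1 ∧
    ∀ t : ℝ, 0 < t →
      (∫ x, SigmaEx t x ∂(gaussianReal 0 t.toNNReal)) = 1 ∧
      (∫ x, SigmaEx t x ∂(gaussianReal 0 (4 * t).toNNReal)) = 2 := by
  have hlt := c2_lt_c1
  have hne : c1 - c2 ≠ 0 := sub_ne_zero.mpr hlt.ne'
  refine ⟨hlt, fun t ht => ?_⟩
  have hst : 0 < Real.sqrt t := Real.sqrt_pos.mpr ht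
  have hsq : Real.sqrt t ^ 2 = t := Real.sq_sqrt ht.le
  -- measure of the middle interval under γ_t is c1
  have hv1 : t.toNNReal = (⟨Real.sqrt t ^ 2, sq_nonneg _⟩ * 1 : ℝ≥0) := by
    ext
    simp [hsq, ht.le, Real.coe_toNNReal]
    exact (congrArg NNReal.toReal (mul_one (⟨t, ht.le⟩ : ℝ≥0))).symm
  have hm1 : ((gaussianReal 0 t.toNNReal (Set.Ioo (-(2 * Real.sqrt t)) (2 * Real.sqrt t)))).toReal
      = c1 := by
    rw [hv1, gauss_scale hst (2 * Real.sqrt t)]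
    rw [mul_div_assoc, div_self hst.ne']
    unfold c1
    norm_num
  have hv2 : (4 * t).toNNReal = (⟨(2 * Real.sqrt t) ^ 2, sq_nonneg _⟩ * 1 : ℝ≥0) := by
    ext
    simp only [NNReal.coe_mul, NNReal.coe_one, NNReal.coe_mk,
      Real.coe_toNNReal _ (show (0:ℝ) ≤ 4 * t by linarith)]
    refine (?_ : 4 * t = (2 * Real.sqrt t) ^ 2).trans (congrArg NNReal.toReal (mul_one (⟨(2 * Real.sqrt t) ^ 2, sq_nonneg _⟩ : ℝ≥0))).symm
    rw [mul_pow, hsq]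
    ring
  have hc2' : c2 = (gaussianReal 0 1 (Set.Ioo (-1 : ℝ) 1)).toReal := by
    have h4 : (4 : ℝ≥0) = (⟨(2 : ℝ) ^ 2, sq_nonneg 2⟩ * 1 : ℝ≥0) := by
      ext; norm_num
      exact (congrArg NNReal.toReal (mul_one (⟨4, by norm_num⟩ : ℝ≥0))).symm
    unfold c2
    rw [h4, gauss_scale (by norm_num : (0:ℝ) < 2) 2]
    norm_num
  have hm2 : ((gaussianReal 0 (4 * t).toNNReal
      (Set.Ioo (-(2 * Real.sqrt t)) (2 * Real.sqrt t)))).toReal = c2 := by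
    rw [hv2, gauss_scale (by positivity) (2 * Real.sqrt t)]
    rw [div_self (by positivity : (2 * Real.sqrt t) ≠ 0)]
    rw [hc2']
  constructor
  · unfold SigmaEx
    rw [integral_if_abs, hm1]
    unfold lam1 lam2
    field_simp
    ring
  · unfold SigmaEx
    rw [integral_if_abs, hm2]
    unfold lam1 lam2
    field_simp
    ring
end
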